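/- Let m > 0, K > 0, B > 0, and T > 0. Let u : [0, T] → ℝ be continuous with u(0) ≥ −K, and suppose that for every t₀ ∈ [0, T) with u(t₀) < −B, the lower right Dini derivative satisfies liminf_{h → 0⁺} (u(t₀ + h) − u(t₀))/h ≥ u(t₀)²/m. Then for every t ∈ [0, T], u(t) ≥ min { −B, −1/(1/K + t/m) } = min { −B, −m/(m/K + t) }. -/

import Mathlib

open Filter

lemma min_sub_min_le_aux {a x y : ℝ} (h : y ≤ x) : min a x - min a y ≤ x - y := by
  rcases le_total a y with h1 | h1 <;> rcases le_total a x with h2 | h2 <;>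
    simp [min_eq_left, min_eq_right, h1, h2] <;> linarith

lemma dini_pos_propagate (a b : ℝ) (f : ℝ → ℝ)
    (hf : ContinuousOn f (Set.Icc a b)) (hfa : 0 < f a)
    (H : ∀ t ∈ Set.Ico a b, f t = 0 → ∀ᶠ h in nhdsWithin 0 (Set.Ioi 0), 0 < f (t + h)) :
    ∀ t ∈ Set.Icc a b, 0 ≤ f t := by
  by_contra hc
  push_neg at hc
  obtain ⟨t₂, ht₂, hft₂⟩ := hc
  set S := Set.Icc a t₂ ∩ f ⁻¹' (Set.Ici 0) with hS
  have hSne : S.Nonempty := ⟨a, ⟨le_refl a, ht₂.1⟩, hfa.le⟩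
  have hsub : Set.Icc a t₂ ⊆ Set.Icc a b := Set.Icc_subset_Icc le_rfl ht₂.2
  have hSclosed : IsClosed S :=
    (hf.mono hsub).preimage_isClosed_of_isClosed isClosed_Icc isClosed_Ici
  have hScomp : IsCompact S := isCompact_Icc.of_isClosed_subset hSclosed fun x hx => hx.1
  set t₁ := sSup S with ht₁def
  have ht₁S : t₁ ∈ S := hScomp.sSup_mem hSne
  have ht₁2 : t₁ ≤ t₂ := ht₁S.1.2
  have ha1 : a ≤ t₁ := ht₁S.1.1
  have hft₁0 : 0 ≤ f t₁ := ht₁S.2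
  have hlt : t₁ < t₂ := lt_of_le_of_ne ht₁2 (fun h => absurd (h ▸ hft₁0) (not_le.2 hft₂))
  have hneg : ∀ s ∈ Set.Ioc t₁ t₂, f s < 0 := by
    intro s hs
    by_contra hfs
    push_neg at hfs
    have : s ∈ S := ⟨⟨ha1.trans hs.1.le, hs.2⟩, hfs⟩
    exact absurd (le_csSup hScomp.bddAbove this) (not_le.2 hs.1)
  have ht₁Icc : t₁ ∈ Set.Icc a b := ⟨ha1, ht₁2.trans ht₂.2⟩
  have hnb : (nhdsWithin t₁ (Set.Ioc t₁ t₂)).NeBot := by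
    rw [← mem_closure_iff_nhdsWithin_neBot, closure_Ioc hlt.ne]
    exact ⟨le_rfl, hlt.le⟩
  have hft₁ : f t₁ = 0 := by
    refine le_antisymm ?_ hft₁0
    by_contra hpos
    push_neg at hpos
    have htend : Filter.Tendsto f (nhdsWithin t₁ (Set.Ioc t₁ t₂)) (nhds (f t₁)) :=
      (hf t₁ ht₁Icc).mono_left
        (nhdsWithin_mono _ (fun s hs => ⟨ha1.trans hs.1.le, hs.2.trans ht₂.2⟩))
    have hev : ∀ᶠ s in nhdsWithin t₁ (Set.Ioc t₁ t₂), 0 < f s :=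
      htend.eventually (eventually_gt_nhds hpos)
    have hev2 : ∀ᶠ s in nhdsWithin t₁ (Set.Ioc t₁ t₂), f s < 0 :=
      eventually_nhdsWithin_of_forall hneg
    obtain ⟨s, h1, h2⟩ := (hev.and hev2).exists
    exact absurd h1 (not_lt.2 h2.le)
  have hH := H t₁ ⟨ha1, lt_of_lt_of_le hlt ht₂.2⟩ hft₁
  have hsmall : ∀ᶠ h in nhdsWithin 0 (Set.Ioi 0), h ∈ Set.Ioo 0 (t₂ - t₁) :=
    Filter.eventually_of_mem (Ioo_mem_nhdsGT_of_mem ⟨le_rfl, sub_pos.2 hlt⟩) (fun x hx => hx)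
  obtain ⟨h, h1, h2⟩ := (hH.and hsmall).exists
  have : f (t₁ + h) < 0 := hneg _ ⟨by linarith [h2.1], by linarith [h2.2]⟩
  linarith

/-- Abstract ε-perturbed Riccati comparison. Here `w s = -(1/(c + s/M))` is a strict
subsolution (since `M > m`) and `-B' < -B` is a strictly lower threshold. -/
lemma key_aux (m M c B B' T : ℝ) (hm : 0 < m) (hmM : m < M) (hc : 0 < c) (hB : 0 < B)
    (hBB' : B < B')
    (u : ℝ → ℝ) (hu : ContinuousOn u (Set.Icc 0 T))
    (hu0 : min (-B') (-(1 / c)) < u 0)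
    (hDini : ∀ t₀ ∈ Set.Ico (0:ℝ) T, u t₀ < -B →
      (u t₀) ^ 2 / m ≤
        Filter.liminf (fun h => (u (t₀ + h) - u t₀) / h) (nhdsWithin 0 (Set.Ioi 0))) :
    ∀ t ∈ Set.Icc (0:ℝ) T, min (-B') (-(1 / (c + t / M))) ≤ u t := by
  have hM : 0 < M := hm.trans hmM
  have hden : ∀ s : ℝ, 0 ≤ s → 0 < c + s / M := by
    intro s hs
    have h2 : 0 ≤ s / M := by positivity
    linarith
  have hkey := dini_pos_propagate 0 T
      (fun s => u s - min (-B') (-(1 / (c + s / M))))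
      (by
        apply hu.sub
        apply ContinuousOn.inf continuousOn_const
        apply ContinuousOn.neg
        apply ContinuousOn.div continuousOn_const
        · fun_prop
        · exact fun s hs => (hden s hs.1).ne')
      (by
        have : c + 0 / M = c := by ring
        rw [this]
        linarith)
      (by
        intro t₁ ht₁ hft₁
        simp only [sub_eq_zero] at hft₁
        have h0t₁ : 0 ≤ t₁ := ht₁.1
        have hφt₁ : min (-B') (-(1 / (c + t₁ / M))) ≤ -B' := min_le_left _ _
        have huB : u t₁ < -B := by rw [hft₁]; linarith
        have hdini := hDini t₁ ht₁ huB
        have hD : 0 < c + t₁ / M := hden t₁ h0t₁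
        -- derivative of w at t₁
        have h1 : HasDerivAt (fun s : ℝ => c + s / M) (1 / M) t₁ := by
          simpa using ((hasDerivAt_id t₁).div_const M).const_add c
        have hw' : HasDerivAt (fun s : ℝ => -(1 / (c + s / M)))
            ((1 / M) / (c + t₁ / M) ^ 2) t₁ := by
          have h2 := (h1.inv hD.ne').neg
          have heq : (fun s : ℝ => -(1 / (c + s / M))) = fun s : ℝ => -((c + s / M)⁻¹) := by
            funext s; rw [one_div]
          rw [heq]
          exact h2.congr_deriv (by ring)
        -- key strict inequality on the derivative
        have hW : -(1 / (c + t₁ / M)) < 0 := by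
          simp only [neg_lt, neg_zero]
          exact one_div_pos.2 hD
        have hUW : u t₁ ≤ -(1 / (c + t₁ / M)) := by rw [hft₁]; exact min_le_right _ _
        have hU0 : u t₁ < 0 := by linarith
        have hU2 : 0 < u t₁ ^ 2 := by nlinarith
        have hW2 : (-(1 / (c + t₁ / M))) ^ 2 ≤ u t₁ ^ 2 := by nlinarith
        have hd_eq : (1 / M) / (c + t₁ / M) ^ 2 = (-(1 / (c + t₁ / M))) ^ 2 / M := by
          rw [neg_sq]
          field_simp
        have hdpos : 0 < (1 / M) / (c + t₁ / M) ^ 2 := by positivity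
        have hdlt : (1 / M) / (c + t₁ / M) ^ 2 < u t₁ ^ 2 / m := by
          rw [hd_eq]
          have e1 : (-(1 / (c + t₁ / M))) ^ 2 / M ≤ u t₁ ^ 2 / M := by gcongr
          have e2 : u t₁ ^ 2 / M < u t₁ ^ 2 / m := div_lt_div_of_pos_left hU2 hm hmM
          linarith
        set q := ((1 / M) / (c + t₁ / M) ^ 2 + u t₁ ^ 2 / m) / 2 with hqdef
        have hq1 : (1 / M) / (c + t₁ / M) ^ 2 < q := by rw [hqdef]; linarith
        have hq2 : q < u t₁ ^ 2 / m := by rw [hqdef]; linarith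
        have hqpos : 0 < q := by rw [hqdef]; linarith
        have hqlim : q < Filter.liminf (fun h => (u (t₁ + h) - u t₁) / h)
            (nhdsWithin 0 (Set.Ioi 0)) := lt_of_lt_of_le hq2 hdini
        rw [Filter.liminf_eq] at hqlim
        have hSne : {a : ℝ | ∀ᶠ h in nhdsWithin 0 (Set.Ioi 0),
            a ≤ (u (t₁ + h) - u t₁) / h}.Nonempty := by
          by_contra he
          rw [Set.not_nonempty_iff_eq_empty] at he
          rw [he, Real.sSup_empty] at hqlim
          linarith
        obtain ⟨a, haS, hqa⟩ := exists_lt_of_lt_csSup hSne hqlim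
        -- slope of w tendsto the derivative along right neighborhoods of 0
        have hmap : Filter.Tendsto (fun h : ℝ => t₁ + h) (nhdsWithin 0 (Set.Ioi 0))
            (nhdsWithin t₁ {t₁}ᶜ) := by
          apply tendsto_nhdsWithin_of_tendsto_nhds_of_eventually_within
          · have h4 : Filter.Tendsto (fun h : ℝ => t₁ + h) (nhds 0) (nhds t₁) :=
              Continuous.tendsto' (by fun_prop) 0 t₁ (by simp)
            exact h4.mono_left nhdsWithin_le_nhds
          · filter_upwards [self_mem_nhdsWithin] with h hh
            simp only [Set.mem_compl_iff, Set.mem_singleton_iff]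
            intro hcon
            have hrw : h = 0 := by linarith [hcon.le, hcon.ge]
            rw [hrw] at hh
            exact lt_irrefl 0 (Set.mem_Ioi.1 hh)
        have hslope : Filter.Tendsto
            (fun h : ℝ => ((-(1 / (c + (t₁ + h) / M))) - (-(1 / (c + t₁ / M)))) / h)
            (nhdsWithin 0 (Set.Ioi 0)) (nhds ((1 / M) / (c + t₁ / M) ^ 2)) := by
          have h3 := (hasDerivAt_iff_tendsto_slope.1 hw').comp hmap
          apply h3.congr'
          filter_upwards [self_mem_nhdsWithin] with h hh
          simp only [Function.comp_apply, slope_def_field]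
          rw [add_sub_cancel_left]
        have hwev : ∀ᶠ h in nhdsWithin 0 (Set.Ioi 0),
            ((-(1 / (c + (t₁ + h) / M))) - (-(1 / (c + t₁ / M)))) / h < q :=
          hslope.eventually (eventually_lt_nhds hq1)
        filter_upwards [haS, hwev, self_mem_nhdsWithin] with h hu1 hw1 hh
        have hhpos : (0:ℝ) < h := hh
        have hu2 : u t₁ + a * h ≤ u (t₁ + h) := by
          have := (le_div_iff₀ hhpos).1 hu1
          linarith
        have hw2 : (-(1 / (c + (t₁ + h) / M))) - (-(1 / (c + t₁ / M))) < q * h := by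
          have := (div_lt_iff₀ hhpos).1 hw1
          linarith
        have hwmono : -(1 / (c + t₁ / M)) ≤ -(1 / (c + (t₁ + h) / M)) := by
          have hD2 : 0 < c + (t₁ + h) / M := hden _ (by linarith)
          have hle : c + t₁ / M ≤ c + (t₁ + h) / M := by
            have : t₁ / M ≤ (t₁ + h) / M := by gcongr; linarith
            linarith
          have := one_div_le_one_div_of_le hD hle
          linarith
        have hφ2 : min (-B') (-(1 / (c + (t₁ + h) / M))) - min (-B') (-(1 / (c + t₁ / M)))
            ≤ (-(1 / (c + (t₁ + h) / M))) - (-(1 / (c + t₁ / M))) :=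
          min_sub_min_le_aux hwmono
        show (0:ℝ) < u (t₁ + h) - min (-B') (-(1 / (c + (t₁ + h) / M)))
        nlinarith [mul_pos (sub_pos.2 hqa) hhpos])
  intro t ht
  have := hkey t ht
  linarith

theorem stmt11 (m K B T : ℝ) (hm : 0 < m) (hK : 0 < K) (hB : 0 < B) (hT : 0 < T)
    (u : ℝ → ℝ) (hu : ContinuousOn u (Set.Icc 0 T))
    (hu0 : -K ≤ u 0)
    (hDini : ∀ t₀ ∈ Set.Ico (0:ℝ) T, u t₀ < -B →
      (u t₀) ^ 2 / m ≤
        Filter.liminf (fun h => (u (t₀ + h) - u t₀) / h) (nhdsWithin 0 (Set.Ioi 0))) :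
    ∀ t ∈ Set.Icc (0:ℝ) T,
      min (-B) (-(1 / (1 / K + t / m))) ≤ u t ∧
        min (-B) (-(1 / (1 / K + t / m))) = min (-B) (-(m / (m / K + t))) := by
  have key : ∀ ε > (0:ℝ), ∀ t ∈ Set.Icc (0:ℝ) T,
      min (-(B + ε)) (-(1 / (1 / (K + ε) + t / (m * (1 + ε))))) ≤ u t := by
    intro ε hε
    have hKε : 0 < K + ε := by linarith
    apply key_aux m (m * (1 + ε)) (1 / (K + ε)) B (B + ε) T hm (by nlinarith)
      (by positivity) hB (by linarith) u hu _ hDini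
    have h1 : (1:ℝ) / (1 / (K + ε)) = K + ε := one_div_one_div _
    rw [h1]
    have : min (-(B + ε)) (-(K + ε)) ≤ -(K + ε) := min_le_right _ _
    linarith
  intro t ht
  have h0t : 0 ≤ t := ht.1
  constructor
  · set G : ℝ → ℝ := fun ε => min (-(B + ε)) (-(1 / (1 / (K + ε) + t / (m * (1 + ε))))) with hGdef
    have hG0 : G 0 = min (-B) (-(1 / (1 / K + t / m))) := by
      simp [hGdef]
    have hGcont : ContinuousAt G 0 := by
      have c1 : ContinuousAt (fun ε : ℝ => 1 / (K + ε)) 0 :=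
        ContinuousAt.div continuousAt_const (by fun_prop) (by simp [hK.ne'])
      have c2 : ContinuousAt (fun ε : ℝ => t / (m * (1 + ε))) 0 :=
        ContinuousAt.div continuousAt_const (by fun_prop) (by simp [hm.ne'])
      have hne : (1 : ℝ) / (K + 0) + t / (m * (1 + 0)) ≠ 0 := by
        have hpos : 0 < 1 / K + t / m := by
          have h2 : 0 ≤ t / m := div_nonneg h0t hm.le
          have h3 : 0 < 1 / K := by positivity
          linarith
        simpa using hpos.ne'
      have c3 : ContinuousAt (fun ε : ℝ => 1 / (1 / (K + ε) + t / (m * (1 + ε)))) 0 :=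
        ContinuousAt.div continuousAt_const (c1.add c2) hne
      exact ContinuousAt.inf (by fun_prop) c3.neg
    have htend : Filter.Tendsto G (nhdsWithin 0 (Set.Ioi 0)) (nhds (G 0)) :=
      hGcont.continuousWithinAt.tendsto
    have hev : ∀ᶠ ε in nhdsWithin 0 (Set.Ioi 0), G ε ≤ u t := by
      filter_upwards [self_mem_nhdsWithin] with ε hε
      exact key ε hε t ht
    have := le_of_tendsto htend hev
    rwa [hG0] at this
  · have h1 : (0:ℝ) < 1 / K + t / m := by
      have h2 : 0 ≤ t / m := div_nonneg h0t hm.le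
      have h3 : 0 < 1 / K := by positivity
      linarith
    have h2 : (0:ℝ) < m / K + t := by
      have : 0 < m / K := by positivity
      linarith
    have h3 : 1 / (1 / K + t / m) = m / (m / K + t) := by
      rw [div_eq_div_iff h1.ne' h2.ne']
      field_simp
    rw [h3]
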